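/- Let Z be an integral domain such that every nonzero element of Z has only finitely many prime divisors up to associates. Then for every natural number B, there are only finitely many principal prime ideals pZ of Z whose quotient Z/pZ is finite of cardinality at most B. -/
import Mathlib


theorem finitely_many_small_prime_ideals
    (Z : Type*) [CommRing Z] [IsDomain Z]
    (hfin : ∀ a : Z, a ≠ 0 →
      ∃ s : Finset Z, ∀ p : Z, Prime p → p ∣ a → ∃ q ∈ s, Associated p q)
    (B : ℕ) :
    Set.Finite {I : Ideal Z | ∃ p : Z, Prime p ∧ I = Ideal.span {p} ∧
      Finite (Z ⧸ I) ∧ Nat.card (Z ⧸ I) ≤ B} := by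
  classical
  have key : ∀ n : ℕ, Set.Finite {I : Ideal Z | ∃ p : Z, Prime p ∧ I = Ideal.span {p} ∧
      Finite (Z ⧸ I) ∧ Nat.card (Z ⧸ I) = n} := by
    intro n
    by_cases hx : ∃ x : Z, x ^ n - x ≠ 0
    · obtain ⟨x, hx⟩ := hx
      obtain ⟨s, hs⟩ := hfin _ hx
      apply Set.Finite.subset (s.image fun q => Ideal.span {q}).finite_toSet
      rintro I ⟨p, hp, rfl, hfinI, hcard⟩
      haveI := hfinI
      haveI hprime : (Ideal.span {p}).IsPrime :=
        (Ideal.span_singleton_prime hp.ne_zero).2 hp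
      haveI : Fintype (Z ⧸ Ideal.span {p}) := Fintype.ofFinite _
      letI : Field (Z ⧸ Ideal.span {p}) := Fintype.fieldOfDomain _
      have hn : Fintype.card (Z ⧸ Ideal.span {p}) = n := by
        rw [← Nat.card_eq_fintype_card]; exact hcard
      have hz : (Ideal.Quotient.mk (Ideal.span {p})) (x ^ n - x) = 0 := by
        rw [map_sub, map_pow, ← hn, FiniteField.pow_card, sub_self]
      have hdvd : p ∣ x ^ n - x := by
        rwa [Ideal.Quotient.eq_zero_iff_mem, Ideal.mem_span_singleton] at hz
      obtain ⟨q, hq, hassoc⟩ := hs p hp hdvd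
      simp only [Finset.coe_image, Set.mem_image, Finset.mem_coe]
      exact ⟨q, hq, Ideal.span_singleton_eq_span_singleton.2 hassoc.symm⟩
    · push_neg at hx
      convert Set.finite_empty
      ext I
      simp only [Set.mem_setOf_eq, Set.mem_empty_iff_false, iff_false]
      rintro ⟨p, hp, rfl, hfinI, hcard⟩
      haveI := hfinI
      haveI hprime : (Ideal.span {p}).IsPrime :=
        (Ideal.span_singleton_prime hp.ne_zero).2 hp
      haveI : Nontrivial (Z ⧸ Ideal.span {p}) :=
        Ideal.Quotient.nontrivial_iff.mpr hprime.ne_top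
      have h2 : 2 ≤ n := by
        rw [← hcard]
        exact Finite.one_lt_card_iff_nontrivial.2 ‹_›
      have hpn : p ^ n - p = 0 := hx p
      have : p * (p ^ (n - 1) - 1) = 0 := by
        have : p * p ^ (n - 1) = p ^ n := by
          rw [← pow_succ']
          congr 1
          omega
        rw [mul_sub, this, mul_one, hpn]
      rcases mul_eq_zero.1 this with h | h
      · exact hp.ne_zero h
      · have hu : p ^ (n - 1) = 1 := by linear_combination h
        exact hp.not_unit (IsUnit.of_pow_eq_one hu (by omega))
  apply Set.Finite.subset (Set.Finite.biUnion (Finset.range (B + 1)).finite_toSet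
    fun n _ => key n)
  rintro I ⟨p, hp, rfl, hf, hle⟩
  refine Set.mem_biUnion ?_ ⟨p, hp, rfl, hf, rfl⟩
  exact Finset.mem_coe.2 (Finset.mem_range.2 (Nat.lt_succ_of_le hle))
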